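/- Suppose T is in case 1 (k < 0 and M < m). Then the exponential I_h satisfies I_h(t_M) = h(t_M) + (a/2)·(e^{k t_M} − e^{k t_m}), and consequently I_h(t_M) > h(t_M). -/
import Mathlib


/-- In case 1 (`k < 0` and `M < m`), the exponential
`I_h(t) = a·e^{kt} + (b_m + b_M)/2` satisfies
`I_h(t_M) = h(t_M) + (a/2)·(e^{k t_M} − e^{k t_m})`, where
`h = (max T + min T)/2 = (T_M + T_m)/2`, and consequently
`I_h(t_M) > h(t_M)`. -/
theorem case1_Ih_above_h_at_tM {n : ℕ}
    (t : Fin n → ℝ) (ht : StrictMono t) (T : Fin n → ℝ)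
    (k : ℝ) (hk : k < 0)
    (m M : Fin n)
    (hm_min : ∀ i, T m ≤ T i) (hm_first : ∀ i, T i = T m → m ≤ i)
    (hM_max : ∀ i, T i ≤ T M) (hM_last : ∀ i, T i = T M → i ≤ M)
    (hMm : M < m)
    (a : ℝ)
    (ha_mem :
      (∃ i, i < m ∧ a = (T i - T m) / (Real.exp (k * t i) - Real.exp (k * t m))) ∨
      (∃ j, M < j ∧ a = (T j - T M) / (Real.exp (k * t j) - Real.exp (k * t M))))
    (ha_min :
      (∀ i, i < m → a ≤ (T i - T m) / (Real.exp (k * t i) - Real.exp (k * t m))) ∧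
      (∀ j, M < j → a ≤ (T j - T M) / (Real.exp (k * t j) - Real.exp (k * t M))))
    (bm bM : ℝ)
    (hbm : bm = T m - a * Real.exp (k * t m))
    (hbM : bM = T M - a * Real.exp (k * t M)) :
    a * Real.exp (k * t M) + (bm + bM) / 2 =
      (T M + T m) / 2 + a / 2 * (Real.exp (k * t M) - Real.exp (k * t m)) ∧
    (T M + T m) / 2 < a * Real.exp (k * t M) + (bm + bM) / 2 := by

  have ha_pos : 0 < a := by
    rcases ha_mem with ⟨i, him, ha⟩ | ⟨j, hjM, ha⟩
    · have hTi : T m < T i := by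
        rcases lt_or_eq_of_le (hm_min i) with h | h
        · exact h
        · exact absurd (hm_first i h.symm) (not_le.mpr him)
      have hden : Real.exp (k * t m) < Real.exp (k * t i) := by
        apply Real.exp_lt_exp.mpr
        have := ht him
        nlinarith
      rw [ha]
      exact div_pos (by linarith) (by linarith)
    · have hTj : T j < T M := by
        rcases lt_or_eq_of_le (hM_max j) with h | h
        · exact h
        · exact absurd (hM_last j h) (not_le.mpr hjM)
      have hden : Real.exp (k * t j) < Real.exp (k * t M) := by
        apply Real.exp_lt_exp.mpr
        have := ht hjM
        nlinarith
      rw [ha, div_pos_iff]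
      right
      constructor <;> linarith
  have hexp : Real.exp (k * t m) < Real.exp (k * t M) := by
    apply Real.exp_lt_exp.mpr
    have := ht hMm
    nlinarith
  constructor
  · rw [hbm, hbM]; ring
  · rw [hbm, hbM]; nlinarith
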